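/- Let g be a finite-dimensional Lie algebra over a field k of characteristic ≠ 2, let σ₁ and σ₂ be commuting involutions of g with quaternionic decomposition g = ⊕_{i,j∈{0,1}} g_{ij}, and suppose there is a Lie algebra automorphism τ of g with σ₂ = τ ∘ σ₁ ∘ τ⁻¹. Then dim_k g₁₀ = dim_k g₀₁. -/

import Mathlib

open Module

section Defs

variable (k : Type*) [Field k] (g : Type*) [LieRing g] [LieAlgebra k g]

/-- The eigenspace of a Lie algebra automorphism `σ` with eigenvalue `ε`,
as a `k`-submodule of `g`.  For an involution `σ`, `autEigenspace k g σ 1` is the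
fixed-point space `g₀` and `autEigenspace k g σ (-1)` is `g₁`. -/
def autEigenspace (σ : g ≃ₗ⁅k⁆ g) (ε : k) : Submodule k g where
  carrier := {x | σ x = ε • x}
  add_mem' {a b} ha hb := by
    have : σ (a + b) = σ a + σ b := map_add σ.toLieHom a b
    simp only [Set.mem_setOf_eq] at ha hb ⊢
    rw [this, ha, hb, smul_add]
  zero_mem' := by
    have : σ (0 : g) = 0 := map_zero σ.toLieHom
    simp only [Set.mem_setOf_eq, this, smul_zero]
  smul_mem' t a ha := by
    have : σ (t • a) = t • σ a := map_smul σ.toLieHom t a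
    simp only [Set.mem_setOf_eq] at ha ⊢
    rw [this, ha, smul_comm]

/-- The centraliser `z_g(x) = {z ∈ g | [z,x] = 0}` of an element `x` of a Lie algebra,
as a submodule. -/
def centralizerSubmodule (x : g) : Submodule k g where
  carrier := {z | ⁅z, x⁆ = 0}
  add_mem' {a b} ha hb := by
    simp only [Set.mem_setOf_eq] at ha hb ⊢
    rw [add_lie, ha, hb, add_zero]
  zero_mem' := zero_lie x
  smul_mem' t a ha := by
    simp only [Set.mem_setOf_eq] at ha ⊢
    rw [smul_lie, ha, smul_zero]

end Defs

/-- Let `g` be a finite-dimensional Lie algebra over a field `k` of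
characteristic `≠ 2`, let `σ₁, σ₂` be commuting involutions of `g` with quaternionic
decomposition `g = ⊕ g_{ij}`, and suppose `σ₂ = τ σ₁ τ⁻¹` for some automorphism `τ` of `g`.
Then `dim g₁₀ = dim g₀₁`. -/
theorem mem_autEigenspace {k : Type*} [Field k] {g : Type*} [LieRing g] [LieAlgebra k g]
    {σ : g ≃ₗ⁅k⁆ g} {ε : k} {x : g} : x ∈ autEigenspace k g σ ε ↔ σ x = ε • x := Iff.rfl

/-- Decomposition of a σ-stable submodule into ±1 eigenspaces of an involution σ. -/
theorem finrank_decomp (k : Type*) [Field k] (h2 : (2 : k) ≠ 0)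
    (g : Type*) [LieRing g] [LieAlgebra k g] [FiniteDimensional k g]
    (σ : g ≃ₗ⁅k⁆ g) (hσ : ∀ x, σ (σ x) = x) (A : Submodule k g)
    (hA : ∀ x ∈ A, σ x ∈ A) :
    finrank k ↥A = finrank k ↥(A ⊓ autEigenspace k g σ 1) +
      finrank k ↥(A ⊓ autEigenspace k g σ (-1)) := by
  have hsm : ∀ (c : k) (y : g), σ (c • y) = c • σ y := fun c y => σ.toLieHom.map_smul c y
  have had : ∀ (y z : g), σ (y + z) = σ y + σ z := fun y z => σ.toLieHom.map_add y z
  have hsb : ∀ (y z : g), σ (y - z) = σ y - σ z := fun y z => σ.toLieHom.map_sub y z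
  have hsup : (A ⊓ autEigenspace k g σ 1) ⊔ (A ⊓ autEigenspace k g σ (-1)) = A := by
    apply le_antisymm (sup_le inf_le_left inf_le_left)
    intro x hx
    have hmem : ((2:k)⁻¹ • (x + σ x)) + ((2:k)⁻¹ • (x - σ x)) = x := by
      rw [← smul_add]
      have : (x + σ x) + (x - σ x) = (2:k) • x := by
        rw [two_smul]; abel
      rw [this, smul_smul, inv_mul_cancel₀ h2, one_smul]
    rw [← hmem]
    apply Submodule.add_mem
    · apply Submodule.mem_sup_left
      refine ⟨Submodule.smul_mem _ _ (Submodule.add_mem _ hx (hA x hx)), ?_⟩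
      show σ _ = (1:k) • _
      rw [one_smul, hsm, had, hσ]
      congr 1
      abel
    · apply Submodule.mem_sup_right
      refine ⟨Submodule.smul_mem _ _ (Submodule.sub_mem _ hx (hA x hx)), ?_⟩
      show σ _ = (-1:k) • _
      rw [hsm, hsb, hσ, neg_one_smul, ← smul_neg]
      congr 1
      abel
  have hinf : (A ⊓ autEigenspace k g σ 1) ⊓ (A ⊓ autEigenspace k g σ (-1)) = ⊥ := by
    rw [Submodule.eq_bot_iff]
    rintro x ⟨⟨_, hx1⟩, ⟨_, hx2⟩⟩
    have e1 : σ x = (1:k) • x := hx1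
    have e2 : σ x = (-1:k) • x := hx2
    have h1 : σ x = x := by rw [e1, one_smul]
    have h2' : σ x = -x := by rw [e2, neg_one_smul]
    have : (2:k) • x = 0 := by
      rw [two_smul]
      exact eq_neg_iff_add_eq_zero.mp (h1.symm.trans h2')
    rcases smul_eq_zero.mp this with h | h
    · exact absurd h h2
    · exact h
  have := Submodule.finrank_sup_add_finrank_inf_eq (A ⊓ autEigenspace k g σ 1) (A ⊓ autEigenspace k g σ (-1))
  rw [hsup, hinf, finrank_bot, add_zero] at this
  omega

theorem dyad_dim_eq
    (k : Type*) [Field k] (h2 : (2 : k) ≠ 0)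
    (g : Type*) [LieRing g] [LieAlgebra k g] [FiniteDimensional k g]
    (σ₁ σ₂ τ : g ≃ₗ⁅k⁆ g) (hσ₁ : ∀ x, σ₁ (σ₁ x) = x) (hσ₂ : ∀ x, σ₂ (σ₂ x) = x)
    (hcomm : ∀ x, σ₁ (σ₂ x) = σ₂ (σ₁ x))
    (hconj : ∀ x, σ₂ x = τ (σ₁ (τ.symm x))) :
    finrank k ↥(autEigenspace k g σ₁ (-1) ⊓ autEigenspace k g σ₂ 1) =
      finrank k ↥(autEigenspace k g σ₁ 1 ⊓ autEigenspace k g σ₂ (-1)) := by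
  have hmap : (autEigenspace k g σ₁ 1).map (τ.toLinearEquiv : g →ₗ[k] g)
      = autEigenspace k g σ₂ 1 := by
    apply le_antisymm
    · rintro _ ⟨x, hx, rfl⟩
      have hx' : σ₁ x = (1:k) • x := hx
      show σ₂ (τ x) = (1:k) • τ x
      rw [hconj (τ x), τ.symm_apply_apply, hx', one_smul, one_smul]
    · intro y hy
      have hy' : σ₂ y = (1:k) • y := hy
      rw [one_smul] at hy'
      refine ⟨τ.symm y, ?_, τ.apply_symm_apply y⟩
      show σ₁ (τ.symm y) = (1:k) • τ.symm y
      have := hconj y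
      rw [hy'] at this
      have := congrArg τ.symm this
      rw [τ.symm_apply_apply] at this
      rw [← this, one_smul]
  have hrank : finrank k ↥(autEigenspace k g σ₁ 1) = finrank k ↥(autEigenspace k g σ₂ 1) := by
    rw [← hmap]
    exact (LinearEquiv.finrank_map_eq τ.toLinearEquiv _).symm
  have hA : ∀ x ∈ autEigenspace k g σ₁ 1, σ₂ x ∈ autEigenspace k g σ₁ 1 := by
    intro x hx
    have hx' : σ₁ x = (1:k) • x := hx
    show σ₁ (σ₂ x) = (1:k) • σ₂ x
    rw [hcomm, hx', one_smul, one_smul]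
  have hB : ∀ x ∈ autEigenspace k g σ₂ 1, σ₁ x ∈ autEigenspace k g σ₂ 1 := by
    intro x hx
    have hx' : σ₂ x = (1:k) • x := hx
    show σ₂ (σ₁ x) = (1:k) • σ₁ x
    rw [← hcomm, hx', one_smul, one_smul]
  have d1 := finrank_decomp k h2 g σ₂ hσ₂ (autEigenspace k g σ₁ 1) hA
  have d2 := finrank_decomp k h2 g σ₁ hσ₁ (autEigenspace k g σ₂ 1) hB
  rw [inf_comm (autEigenspace k g σ₂ 1) (autEigenspace k g σ₁ 1),
    inf_comm (autEigenspace k g σ₂ 1) (autEigenspace k g σ₁ (-1))] at d2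
  rw [hrank] at d1
  omega
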